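/- For all integers r, s ≥ 1 and every i, the alternating sum Σ_{j=0}^{r} (-1)^j · S^{r-j}_s(i) · T^{j}_s(i + r - j) equals 0. -/

import Mathlib

variable {R : Type*} [CommRing R]

/-- Discrete polynomials `T^r_s(i)` (case `h = n = 1`), with the convention
`T^0_s = 1` and `T^r_s = 0` for `s = 0`, `r ≥ 1`. -/
def Tp (T : ℤ → R) : ℕ → ℕ → ℤ → R
  | 0, _, _ => 1
  | _ + 1, 0, _ => 0
  | r + 1, s + 1, i => Tp T (r + 1) s (i + 1) + T i * Tp T r s (i + 2)

/-- Discrete polynomials `S^r_s(i)` (case `h = n = 1`). -/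
def Sp (T : ℤ → R) : ℕ → ℕ → ℤ → R
  | 0, _, _ => 1
  | _ + 1, 0, _ => 0
  | r + 1, 1, i => ∏ q ∈ Finset.range (r + 1), T (i + q)
  | r + 1, s + 2, i => Sp T (r + 1) (s + 1) (i + 1) + T (i + r) * Sp T r (s + 2) i
  termination_by r s _ => r + s

lemma Tp_rec (T : ℤ → R) (j s : ℕ) (i : ℤ) :
    Tp T (j + 1) (s + 1) i = Tp T (j + 1) s (i + 1) + T i * Tp T j s (i + 2) := rfl

lemma Sp_rec (T : ℤ → R) (m s : ℕ) (i : ℤ) :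
    Sp T (m + 1) (s + 2) i = Sp T (m + 1) (s + 1) (i + 1) + T (i + m) * Sp T m (s + 2) i := by
  rw [Sp]

lemma Sp_one' (T : ℤ → R) (n : ℕ) (i : ℤ) :
    Sp T n 1 i = ∏ q ∈ Finset.range n, T (i + q) := by
  cases n with
  | zero => simp [Sp]
  | succ n => rw [Sp]

/-- Auxiliary telescoping function. -/
def U (T : ℤ → R) (r s : ℕ) (i : ℤ) : ℕ → R
  | 0 => 0
  | j + 1 => (-1 : R) ^ j * T (i + (r : ℤ) - ((j : ℤ) + 1)) * Sp T (r - (j + 1)) (s + 2) i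
      * Tp T j (s + 1) (i + (r : ℤ) - ((j : ℤ) + 1) + 2)

lemma term_eq (T : ℤ → R) (r s j : ℕ) (hj : j < r) (i : ℤ) :
    (-1 : R) ^ j * Sp T (r - j) (s + 2) i * Tp T j (s + 2) (i + (r : ℤ) - (j : ℤ))
      = (-1 : R) ^ j * Sp T (r - j) (s + 1) (i + 1) * Tp T j (s + 1) ((i + 1) + (r : ℤ) - (j : ℤ))
        + (U T r s i (j + 1) - U T r s i j) := by
  obtain ⟨k, rfl⟩ : ∃ k, r = j + k + 1 := ⟨r - j - 1, by omega⟩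
  have h1 : j + k + 1 - j = k + 1 := by omega
  have h2 : j + k + 1 - (j + 1) = k := by omega
  cases j with
  | zero =>
    simp only [U, Nat.zero_add, Nat.sub_zero, Nat.add_sub_cancel, pow_zero, Nat.cast_zero, Tp]
    rw [Sp_rec]
    push_cast
    ring_nf
  | succ j' =>
    have h3 : j' + 1 + k + 1 - (j' + 1) = k + 1 := by omega
    have h4 : j' + 1 + k + 1 - (j' + 1 + 1) = k := by omega
    have h5 : j' + 1 + k + 1 - j' = k + 2 := by omega
    simp only [U, h3, h4]
    rw [Sp_rec T k s i, Tp_rec T j' (s + 1)]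
    push_cast
    ring_nf

lemma last_eq (T : ℤ → R) (r s : ℕ) (hr : 1 ≤ r) (i : ℤ) :
    (-1 : R) ^ r * Sp T (r - r) (s + 2) i * Tp T r (s + 2) (i + (r : ℤ) - (r : ℤ))
      = (-1 : R) ^ r * Sp T (r - r) (s + 1) (i + 1) * Tp T r (s + 1) ((i + 1) + (r : ℤ) - (r : ℤ))
        - U T r s i r := by
  obtain ⟨r', rfl⟩ : ∃ r', r = r' + 1 := ⟨r - 1, by omega⟩
  have h1 : r' + 1 - (r' + 1) = 0 := by omega
  have h2 : i + ((r' : ℤ) + 1) - ((r' : ℤ) + 1) = i := by ring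
  simp only [U, h1, Nat.sub_self]
  push_cast
  rw [h2, Tp_rec T r' (s + 1) i]
  have h3 : i + ((r' : ℤ) + 1) - ((r' : ℤ) + 1) + 2 = i + 2 := by ring
  have h4 : i + ((r' : ℤ) + 1) - (r' : ℤ) = i + 1 := by ring
  simp only [Sp, h3]
  ring_nf

lemma step (T : ℤ → R) (r s : ℕ) (hr : 1 ≤ r) (i : ℤ) :
    (∑ j ∈ Finset.range (r + 1),
        (-1 : R) ^ j * Sp T (r - j) (s + 2) i * Tp T j (s + 2) (i + (r : ℤ) - (j : ℤ)))
      = ∑ j ∈ Finset.range (r + 1),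
        (-1 : R) ^ j * Sp T (r - j) (s + 1) (i + 1) * Tp T j (s + 1) ((i + 1) + (r : ℤ) - (j : ℤ)) := by
  rw [Finset.sum_range_succ, Finset.sum_range_succ, last_eq T r s hr i]
  have h1 : ∀ j ∈ Finset.range r,
      (-1 : R) ^ j * Sp T (r - j) (s + 2) i * Tp T j (s + 2) (i + (r : ℤ) - (j : ℤ))
        = (-1 : R) ^ j * Sp T (r - j) (s + 1) (i + 1) * Tp T j (s + 1) ((i + 1) + (r : ℤ) - (j : ℤ))
          + (U T r s i (j + 1) - U T r s i j) := fun j hj =>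
    term_eq T r s j (Finset.mem_range.mp hj) i
  rw [Finset.sum_congr rfl h1, Finset.sum_add_distrib, Finset.sum_range_sub (U T r s i)]
  have h0 : U T r s i 0 = 0 := rfl
  rw [h0]
  ring

lemma base_case (T : ℤ → R) (r : ℕ) (hr : 1 ≤ r) (i : ℤ) :
    ∑ j ∈ Finset.range (r + 1),
      (-1 : R) ^ j * Sp T (r - j) 1 i * Tp T j 1 (i + (r : ℤ) - (j : ℤ)) = 0 := by
  obtain ⟨r', rfl⟩ : ∃ r', r = r' + 1 := ⟨r - 1, by omega⟩
  rw [Finset.sum_range_succ', Finset.sum_range_succ']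
  have hz : ∀ x ∈ Finset.range r',
      (-1 : R) ^ (x + 1 + 1) * Sp T (r' + 1 - (x + 1 + 1)) 1 i
        * Tp T (x + 1 + 1) 1 (i + ((r' : ℤ) + 1) - ((x : ℤ) + 1 + 1)) = 0 := by
    intro x _
    have : Tp T (x + 1 + 1) 1 (i + ((r' : ℤ) + 1) - ((x : ℤ) + 1 + 1)) = 0 := by
      simp [Tp]
    rw [this, mul_zero]
  rw [Finset.sum_congr rfl (by push_cast at hz ⊢; exact hz), Finset.sum_const_zero]
  simp only [Nat.add_sub_cancel, Nat.sub_zero, pow_zero, pow_one, Nat.cast_zero, Nat.cast_one]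
  rw [Sp_one', Sp_one', Finset.prod_range_succ]
  have hA : ∀ y : ℤ, Tp T 1 1 y = T y := fun y => by simp [Tp]
  have hB : ∀ y : ℤ, Tp T 0 1 y = 1 := fun y => rfl
  simp only [hA, hB]
  push_cast
  ring_nf

/-- Identity `(S,T)^r_s(i) = Σ_{j=0}^{r} (-1)^j S^{r-j}_s(i) T^{j}_s(i+r-j) = 0`
for all `r, s ≥ 1`. -/
theorem ST_identity (T : ℤ → R) (r s : ℕ) (hr : 1 ≤ r) (hs : 1 ≤ s) (i : ℤ) :
    ∑ j ∈ Finset.range (r + 1),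
      (-1 : R) ^ j * Sp T (r - j) s i * Tp T j s (i + (r : ℤ) - (j : ℤ)) = 0 := by
  induction s, hs using Nat.le_induction generalizing i with
  | base => exact base_case T r hr i
  | succ n hn ih =>
    obtain ⟨m, rfl⟩ : ∃ m, n = m + 1 := ⟨n - 1, by omega⟩
    rw [step T r m hr i]
    exact ih (i + 1)
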